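/- Atom-equivalence is an equivalence relation on the class of monoform objects of a Grothendieck category. -/

import Mathlib

open CategoryTheory Category Limits

universe v u

/-- A Grothendieck category: an abelian category with (small) colimits, exact filtered
colimits (AB5) and a separator. -/
class GrothendieckCategory (C : Type u) [Category.{v} C] [Abelian C] : Prop where
  hasColimits : Limits.HasColimits C
  hasFilteredColimits : Limits.HasFilteredColimits C
  ab5 : @AB5 C _ hasFilteredColimits
  hasSeparator : HasSeparator C

/-- An object `X` is monoform if for every subobject `H` of `X`, every nonzero morphism
`H ⟶ X` is a monomorphism. -/
def Monoform {C : Type u} [Category.{v} C] [Abelian C] (X : C) : Prop :=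
  ∀ ⦃H : C⦄ (i : H ⟶ X), Mono i → ∀ f : H ⟶ X, f ≠ 0 → Mono f

/-- Two objects are atom-equivalent if there is a nonzero object admitting monomorphisms
into both. -/
def AtomEquiv {C : Type u} [Category.{v} C] [Abelian C] (X X' : C) : Prop :=
  ∃ (H : C) (f : H ⟶ X) (g : H ⟶ X'), ¬ IsZero H ∧ Mono f ∧ Mono g

/-- A mono out of a nonzero object is nonzero. -/
lemma mono_ne_zero {C : Type u} [Category.{v} C] [Abelian C] {H Y : C}
    (f : H ⟶ Y) (hf : Mono f) (hH : ¬ IsZero H) : f ≠ 0 := by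
  intro h
  apply hH
  rw [IsZero.iff_id_eq_zero]
  have : 𝟙 H ≫ f = 0 ≫ f := by simp [h]
  exact (cancel_mono f).mp this

/-- Key lemma: a monoform object is uniform, i.e. two nonzero subobjects have nonzero
intersection (pullback). -/
lemma pullback_not_isZero {C : Type u} [Category.{v} C] [Abelian C] {Y H₁ H₂ : C}
    (hY : Monoform Y) (h₁ : ¬ IsZero H₁) (h₂ : ¬ IsZero H₂)
    (f : H₁ ⟶ Y) (g : H₂ ⟶ Y) [Mono f] [Mono g] : ¬ IsZero (pullback f g) := by
  intro hP
  set u : H₁ ⊞ H₂ ⟶ Y := biprod.fst ≫ f + biprod.snd ≫ g with hu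
  have hkc : kernel.ι u ≫ u = 0 := kernel.condition u
  have hw : (kernel.ι u ≫ biprod.fst) ≫ f = (-(kernel.ι u ≫ biprod.snd)) ≫ g := by
    have : kernel.ι u ≫ biprod.fst ≫ f + kernel.ι u ≫ biprod.snd ≫ g = 0 := by
      simpa [hu, Preadditive.comp_add] using hkc
    simp only [Preadditive.neg_comp, assoc]
    linear_combination (norm := simp) this
  have hκ : pullback.lift (kernel.ι u ≫ biprod.fst) (-(kernel.ι u ≫ biprod.snd)) hw =
      (0 : kernel u ⟶ pullback f g) := hP.eq_of_tgt _ _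
  have hker : kernel.ι u ≫ (biprod.fst ≫ f) = 0 := by
    have h1 : kernel.ι u ≫ biprod.fst = 0 := by
      have := pullback.lift_fst (kernel.ι u ≫ biprod.fst) (-(kernel.ι u ≫ biprod.snd)) hw
      rw [hκ, zero_comp] at this
      exact this.symm
    rw [← assoc, h1, zero_comp]
  set φ : Abelian.coimage u ⟶ Y := cokernel.desc (kernel.ι u) (biprod.fst ≫ f) hker with hφ
  have hπφ : cokernel.π (kernel.ι u) ≫ φ = biprod.fst ≫ f := cokernel.π_desc _ _ _
  have hφne : φ ≠ 0 := by
    intro h0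
    apply mono_ne_zero f ‹Mono f› h₁
    have hfst : (biprod.fst : H₁ ⊞ H₂ ⟶ H₁) ≫ f = 0 := by rw [← hπφ, h0, comp_zero]
    have := congrArg ((biprod.inl : H₁ ⟶ H₁ ⊞ H₂) ≫ ·) hfst
    simpa using this
  have hmono : Mono φ := hY (Abelian.factorThruCoimage u) inferInstance φ hφne
  have hzero : (biprod.inr ≫ cokernel.π (kernel.ι u)) ≫ φ = 0 := by
    rw [assoc, hπφ]; simp
  have h2 : biprod.inr ≫ cokernel.π (kernel.ι u) = 0 := by
    have := hzero.trans (zero_comp (f := φ)).symm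
    exact (cancel_mono φ).mp this
  apply mono_ne_zero g ‹Mono g› h₂
  have : biprod.inr ≫ cokernel.π (kernel.ι u) ≫ Abelian.factorThruCoimage u
      = biprod.inr ≫ u := by rw [Abelian.coimage.fac]
  rw [← assoc, h2, zero_comp] at this
  simpa [hu] using this.symm

/-- Atom-equivalence is an equivalence relation on the (nonzero) monoform objects of a
Grothendieck category. -/
theorem atomEquiv_equivalence {C : Type u} [Category.{v} C] [Abelian C]
    [GrothendieckCategory C] :
    Equivalence (fun X Y : {X : C // Monoform X ∧ ¬ IsZero X} => AtomEquiv X.1 Y.1) := by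
  constructor
  · intro X
    exact ⟨X.1, 𝟙 X.1, 𝟙 X.1, X.2.2, inferInstance, inferInstance⟩
  · rintro X Y ⟨H, f, g, hH, hf, hg⟩
    exact ⟨H, g, f, hH, hg, hf⟩
  · rintro X Y Z ⟨H₁, f₁, g₁, hH₁, hf₁, hg₁⟩ ⟨H₂, f₂, g₂, hH₂, hf₂, hg₂⟩
    haveI := hf₁; haveI := hg₁; haveI := hf₂; haveI := hg₂
    have hP := pullback_not_isZero Y.2.1 hH₁ hH₂ g₁ f₂
    exact ⟨pullback g₁ f₂, pullback.fst g₁ f₂ ≫ f₁, pullback.snd g₁ f₂ ≫ g₂, hP,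
      mono_comp _ _, mono_comp _ _⟩
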